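/- For any odd n ≥ 5, if each of the four subcubes TQ_{n-2}^{ij} of TQ_n contains two edge-disjoint Hamiltonian paths P^{ij} from ij00(0)^{n-7}000 to ij11(0)^{n-7}000 and Q^{ij} from ij00(0)^{n-7}100 to ij01(0)^{n-7}100, then the concatenations P = P^{00} ⇒ reverse(P^{10}) ⇒ P^{01} ⇒ reverse(P^{11}) and Q = Q^{00} ⇒ reverse(Q^{10}) ⇒ Q^{11} ⇒ reverse(Q^{01}) are two edge-disjoint Hamiltonian paths of TQ_n. -/

import Mathlib

/-- Parity function `P i b = b_i ⊕ b_{i-1} ⊕ ... ⊕ b_0`. -/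
def parityFn {n : ℕ} (b : Fin n → Bool) (i : ℕ) : Bool :=
  decide ((((List.range (i+1)).filter fun j => if h : j < n then b ⟨j, h⟩ else false).length) % 2 = 1)

/-- The low-order `2k+1` bits of a binary string of length `2(k+1)+1`. -/
def lowBits {k : ℕ} (b : Fin (2*(k+1)+1) → Bool) : Fin (2*k+1) → Bool :=
  fun i => b (Fin.castLE (by omega) i)

/-- The cross-edge relation in the twisted cube `TQ_{2(k+1)+1}`:
`b'` is a cross-edge neighbor of `b`. -/
def crossRel (k : ℕ) (b b' : Fin (2*(k+1)+1) → Bool) : Prop :=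
  lowBits b' = lowBits b ∧
  ((b' ⟨2*k+2, by omega⟩ = !b ⟨2*k+2, by omega⟩ ∧ b' ⟨2*k+1, by omega⟩ = b ⟨2*k+1, by omega⟩) ∨
   (parityFn b (2*k) = false ∧ b' ⟨2*k+2, by omega⟩ = !b ⟨2*k+2, by omega⟩ ∧
      b' ⟨2*k+1, by omega⟩ = !b ⟨2*k+1, by omega⟩) ∨
   (parityFn b (2*k) = true ∧ b' ⟨2*k+2, by omega⟩ = b ⟨2*k+2, by omega⟩ ∧
      b' ⟨2*k+1, by omega⟩ = !b ⟨2*k+1, by omega⟩))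

/-- The twisted cube `TQ_n` for odd `n = 2k+1`, on vertex set the binary
strings of length `n` (bit `i` of `b` is `b i`). -/
def TwistedCube : (k : ℕ) → SimpleGraph (Fin (2*k+1) → Bool)
  | 0 => ⊤
  | (k+1) =>
    { Adj := fun b b' => b ≠ b' ∧
        ((b ⟨2*k+2, by omega⟩ = b' ⟨2*k+2, by omega⟩ ∧ b ⟨2*k+1, by omega⟩ = b' ⟨2*k+1, by omega⟩ ∧
          (TwistedCube k).Adj (lowBits b) (lowBits b')) ∨
         crossRel k b b' ∨ crossRel k b' b)
      symm := ⟨by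
        rintro b b' ⟨hne, h⟩
        refine ⟨hne.symm, ?_⟩
        rcases h with ⟨h1, h2, h3⟩ | h | h
        · exact Or.inl ⟨h1.symm, h2.symm, (TwistedCube k).adj_symm h3⟩
        · exact Or.inr (Or.inr h)
        · exact Or.inr (Or.inl h)⟩
      loopless := ⟨fun b h => h.1 rfl⟩ }

/-- Start of the Hamiltonian path `P^{ij}` in the subcube with leading bits `ij`:
the string `ij00(0)^{n-7}000` (all low bits zero), with `n = 2(m+1)+1`. -/
def startP (m : ℕ) (i j : Bool) : Fin (2*(m+1)+1) → Bool :=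
  fun idx => if (idx : ℕ) = 2*m+2 then i else if (idx : ℕ) = 2*m+1 then j else false

/-- End of `P^{ij}`: the string `ij11(0)^{n-7}000`. -/
def endP (m : ℕ) (i j : Bool) : Fin (2*(m+1)+1) → Bool :=
  fun idx => if (idx : ℕ) = 2*m+2 then i else if (idx : ℕ) = 2*m+1 then j
    else decide ((idx : ℕ) = 2*m ∨ (idx : ℕ) = 2*m-1)

/-- Start of `Q^{ij}`: the string `ij00(0)^{n-7}100`. -/
def startQ (m : ℕ) (i j : Bool) : Fin (2*(m+1)+1) → Bool :=
  fun idx => if (idx : ℕ) = 2*m+2 then i else if (idx : ℕ) = 2*m+1 then j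
    else decide ((idx : ℕ) = 2)

/-- End of `Q^{ij}`: the string `ij01(0)^{n-7}100`. -/
def endQ (m : ℕ) (i j : Bool) : Fin (2*(m+1)+1) → Bool :=
  fun idx => if (idx : ℕ) = 2*m+2 then i else if (idx : ℕ) = 2*m+1 then j
    else decide ((idx : ℕ) = 2*m-1 ∨ (idx : ℕ) = 2)

-- tag lemmas
lemma startP_hi (m : ℕ) (i j : Bool) : startP m i j ⟨2*m+2, by omega⟩ = i := by simp [startP]
lemma startP_lo (m : ℕ) (i j : Bool) : startP m i j ⟨2*m+1, by omega⟩ = j := by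
  simp [startP, show 2*m+1 ≠ 2*m+2 from by omega]
lemma endP_hi (m : ℕ) (i j : Bool) : endP m i j ⟨2*m+2, by omega⟩ = i := by simp [endP]
lemma endP_lo (m : ℕ) (i j : Bool) : endP m i j ⟨2*m+1, by omega⟩ = j := by
  simp [endP, show 2*m+1 ≠ 2*m+2 from by omega]
lemma startQ_hi (m : ℕ) (i j : Bool) : startQ m i j ⟨2*m+2, by omega⟩ = i := by simp [startQ]
lemma startQ_lo (m : ℕ) (i j : Bool) : startQ m i j ⟨2*m+1, by omega⟩ = j := by
  simp [startQ, show 2*m+1 ≠ 2*m+2 from by omega]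
lemma endQ_hi (m : ℕ) (i j : Bool) : endQ m i j ⟨2*m+2, by omega⟩ = i := by simp [endQ]
lemma endQ_lo (m : ℕ) (i j : Bool) : endQ m i j ⟨2*m+1, by omega⟩ = j := by
  simp [endQ, show 2*m+1 ≠ 2*m+2 from by omega]

-- bit 2 lemmas
lemma startP_bit2 (m : ℕ) (hm : 2 ≤ m) (i j : Bool) : startP m i j ⟨2, by omega⟩ = false := by
  simp [startP, show (2:ℕ) ≠ 2*m+2 from by omega, show (2:ℕ) ≠ 2*m+1 from by omega, show m ≠ 0 from by omega]
lemma endP_bit2 (m : ℕ) (hm : 2 ≤ m) (i j : Bool) : endP m i j ⟨2, by omega⟩ = false := by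
  simp [endP, show (2:ℕ) ≠ 2*m+2 from by omega, show (2:ℕ) ≠ 2*m+1 from by omega,
    show (2:ℕ) ≠ 2*m from by omega, show (2:ℕ) ≠ 2*m-1 from by omega, show m ≠ 0 from by omega]
lemma startQ_bit2 (m : ℕ) (hm : 2 ≤ m) (i j : Bool) : startQ m i j ⟨2, by omega⟩ = true := by
  simp [startQ, show (2:ℕ) ≠ 2*m+2 from by omega, show (2:ℕ) ≠ 2*m+1 from by omega, show m ≠ 0 from by omega]
lemma endQ_bit2 (m : ℕ) (hm : 2 ≤ m) (i j : Bool) : endQ m i j ⟨2, by omega⟩ = true := by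
  simp [endQ, show (2:ℕ) ≠ 2*m+2 from by omega, show (2:ℕ) ≠ 2*m+1 from by omega, show m ≠ 0 from by omega]

-- lowBits independence
lemma lowBits_startP (m : ℕ) (i j i' j' : Bool) : lowBits (startP m i j) = lowBits (startP m i' j') := by
  funext idx; have := idx.isLt
  simp only [lowBits, startP, Fin.coe_castLE]
  rw [if_neg (by omega), if_neg (by omega), if_neg (by omega), if_neg (by omega)]
lemma lowBits_endP (m : ℕ) (i j i' j' : Bool) : lowBits (endP m i j) = lowBits (endP m i' j') := by
  funext idx; have := idx.isLt
  simp only [lowBits, endP, Fin.coe_castLE]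
  rw [if_neg (by omega), if_neg (by omega), if_neg (by omega), if_neg (by omega)]
lemma lowBits_startQ (m : ℕ) (i j i' j' : Bool) : lowBits (startQ m i j) = lowBits (startQ m i' j') := by
  funext idx; have := idx.isLt
  simp only [lowBits, startQ, Fin.coe_castLE]
  rw [if_neg (by omega), if_neg (by omega), if_neg (by omega), if_neg (by omega)]
lemma lowBits_endQ (m : ℕ) (i j i' j' : Bool) : lowBits (endQ m i j) = lowBits (endQ m i' j') := by
  funext idx; have := idx.isLt
  simp only [lowBits, endQ, Fin.coe_castLE]
  rw [if_neg (by omega), if_neg (by omega), if_neg (by omega), if_neg (by omega)]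

-- parity lemmas
lemma parity_startP (m : ℕ) (i j : Bool) : parityFn (startP m i j) (2*m) = false := by
  unfold parityFn
  rw [List.filter_eq_nil_iff.mpr ?_]
  · rfl
  · intro x hx
    have hx' := List.mem_range.mp hx
    rw [dif_pos (by omega : x < 2*(m+1)+1)]
    simp [startP, show x ≠ 2*m+2 from by omega, show x ≠ 2*m+1 from by omega]

lemma filter_range_two : ∀ n, 3 ≤ n → (List.range n).filter (fun x => decide (x = 2)) = [2] := by
  intro n hn
  induction n with
  | zero => omega
  | succ k ih =>
    by_cases hk : k = 2
    · subst hk; decide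
    · have h3 : 3 ≤ k := by omega
      rw [List.range_succ, List.filter_append, ih h3]
      simp [hk]

lemma parity_startQ (m : ℕ) (hm : 2 ≤ m) (i j : Bool) : parityFn (startQ m i j) (2*m) = true := by
  unfold parityFn
  rw [List.filter_congr (fun x hx => ?_), filter_range_two (2*m+1) (by omega)]
  · rfl
  · have hx' := List.mem_range.mp hx
    rw [dif_pos (by omega : x < 2*(m+1)+1)]
    simp [startQ, show x ≠ 2*m+2 from by omega, show x ≠ 2*m+1 from by omega]

lemma twistedCube_adj_iff (k : ℕ) (b b' : Fin (2*(k+1)+1) → Bool) :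
    (TwistedCube (k+1)).Adj b b' ↔ (b ≠ b' ∧
        ((b ⟨2*k+2, by omega⟩ = b' ⟨2*k+2, by omega⟩ ∧ b ⟨2*k+1, by omega⟩ = b' ⟨2*k+1, by omega⟩ ∧
          (TwistedCube k).Adj (lowBits b) (lowBits b')) ∨
         crossRel k b b' ∨ crossRel k b' b)) := Iff.rfl

section Adj
variable (m : ℕ) (hm : 2 ≤ m)

lemma adj_h1 : (TwistedCube (m+1)).Adj (endP m false false) (endP m true false) := by
  rw [twistedCube_adj_iff]
  refine ⟨fun h => ?_, Or.inr (Or.inl ⟨lowBits_endP m true false false false, Or.inl ⟨?_, ?_⟩⟩)⟩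
  · have := congrFun h ⟨2*m+2, by omega⟩
    rw [endP_hi, endP_hi] at this; exact Bool.noConfusion this
  · rw [endP_hi, endP_hi]; rfl
  · rw [endP_lo, endP_lo]

lemma adj_h2 : (TwistedCube (m+1)).Adj (startP m true false) (startP m false true) := by
  rw [twistedCube_adj_iff]
  refine ⟨fun h => ?_, Or.inr (Or.inl ⟨lowBits_startP m false true true false,
    Or.inr (Or.inl ⟨parity_startP m true false, ?_, ?_⟩)⟩)⟩
  · have := congrFun h ⟨2*m+2, by omega⟩
    rw [startP_hi, startP_hi] at this; exact Bool.noConfusion this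
  · rw [startP_hi, startP_hi]; rfl
  · rw [startP_lo, startP_lo]; rfl

lemma adj_h3 : (TwistedCube (m+1)).Adj (endP m false true) (endP m true true) := by
  rw [twistedCube_adj_iff]
  refine ⟨fun h => ?_, Or.inr (Or.inl ⟨lowBits_endP m true true false true, Or.inl ⟨?_, ?_⟩⟩)⟩
  · have := congrFun h ⟨2*m+2, by omega⟩
    rw [endP_hi, endP_hi] at this; exact Bool.noConfusion this
  · rw [endP_hi, endP_hi]; rfl
  · rw [endP_lo, endP_lo]

lemma adj_g1 : (TwistedCube (m+1)).Adj (endQ m false false) (endQ m true false) := by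
  rw [twistedCube_adj_iff]
  refine ⟨fun h => ?_, Or.inr (Or.inl ⟨lowBits_endQ m true false false false, Or.inl ⟨?_, ?_⟩⟩)⟩
  · have := congrFun h ⟨2*m+2, by omega⟩
    rw [endQ_hi, endQ_hi] at this; exact Bool.noConfusion this
  · rw [endQ_hi, endQ_hi]; rfl
  · rw [endQ_lo, endQ_lo]

include hm in
lemma adj_g2 : (TwistedCube (m+1)).Adj (startQ m true false) (startQ m true true) := by
  rw [twistedCube_adj_iff]
  refine ⟨fun h => ?_, Or.inr (Or.inl ⟨lowBits_startQ m true true true false,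
    Or.inr (Or.inr ⟨parity_startQ m hm true false, ?_, ?_⟩)⟩)⟩
  · have := congrFun h ⟨2*m+1, by omega⟩
    rw [startQ_lo, startQ_lo] at this; exact Bool.noConfusion this
  · rw [startQ_hi, startQ_hi]
  · rw [startQ_lo, startQ_lo]; rfl

lemma adj_g3 : (TwistedCube (m+1)).Adj (endQ m true true) (endQ m false true) := by
  rw [twistedCube_adj_iff]
  refine ⟨fun h => ?_, Or.inr (Or.inl ⟨lowBits_endQ m false true true true, Or.inl ⟨?_, ?_⟩⟩)⟩
  · have := congrFun h ⟨2*m+2, by omega⟩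
    rw [endQ_hi, endQ_hi] at this; exact Bool.noConfusion this
  · rw [endQ_hi, endQ_hi]; rfl
  · rw [endQ_lo, endQ_lo]

end Adj

section Quad
open SimpleGraph Walk
variable {V : Type*} [DecidableEq V] {G : SimpleGraph V} {u1 u2 u3 u4 u5 u6 u7 u8 : V}

lemma quad_support (p1 : G.Walk u1 u2) (h1 : G.Adj u2 u3) (p2 : G.Walk u3 u4)
    (h2 : G.Adj u4 u5) (p3 : G.Walk u5 u6) (h3 : G.Adj u6 u7) (p4 : G.Walk u7 u8) :
    (p1.append (Walk.cons h1 (p2.append (Walk.cons h2 (p3.append (Walk.cons h3 p4)))))).support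
      = p1.support ++ (p2.support ++ (p3.support ++ p4.support)) := by
  simp only [Walk.support_append, Walk.support_cons, List.tail_cons]

lemma quad_path (p1 : G.Walk u1 u2) (h1 : G.Adj u2 u3) (p2 : G.Walk u3 u4)
    (h2 : G.Adj u4 u5) (p3 : G.Walk u5 u6) (h3 : G.Adj u6 u7) (p4 : G.Walk u7 u8)
    (hp1 : p1.IsPath) (hp2 : p2.IsPath) (hp3 : p3.IsPath) (hp4 : p4.IsPath)
    (d12 : p1.support.Disjoint p2.support) (d13 : p1.support.Disjoint p3.support)
    (d14 : p1.support.Disjoint p4.support) (d23 : p2.support.Disjoint p3.support)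
    (d24 : p2.support.Disjoint p4.support) (d34 : p3.support.Disjoint p4.support) :
    (p1.append (Walk.cons h1 (p2.append (Walk.cons h2 (p3.append (Walk.cons h3 p4)))))).IsPath := by
  rw [Walk.isPath_def, quad_support]
  refine List.Nodup.append hp1.support_nodup
    (List.Nodup.append hp2.support_nodup
      (List.Nodup.append hp3.support_nodup hp4.support_nodup d34)
      (List.disjoint_append_right.mpr ⟨d23, d24⟩))
    (List.disjoint_append_right.mpr ⟨d12, List.disjoint_append_right.mpr ⟨d13, d14⟩⟩)

lemma quad_ham (p1 : G.Walk u1 u2) (h1 : G.Adj u2 u3) (p2 : G.Walk u3 u4)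
    (h2 : G.Adj u4 u5) (p3 : G.Walk u5 u6) (h3 : G.Adj u6 u7) (p4 : G.Walk u7 u8)
    (hpath : (p1.append (Walk.cons h1 (p2.append (Walk.cons h2 (p3.append (Walk.cons h3 p4)))))).IsPath)
    (hcov : ∀ v, v ∈ p1.support ∨ v ∈ p2.support ∨ v ∈ p3.support ∨ v ∈ p4.support) :
    (p1.append (Walk.cons h1 (p2.append (Walk.cons h2 (p3.append (Walk.cons h3 p4)))))).IsHamiltonian := by
  intro v
  refine List.count_eq_one_of_mem hpath.support_nodup ?_
  rw [quad_support]
  simp only [List.mem_append]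
  rcases hcov v with h|h|h|h <;> tauto

lemma quad_edges (p1 : G.Walk u1 u2) (h1 : G.Adj u2 u3) (p2 : G.Walk u3 u4)
    (h2 : G.Adj u4 u5) (p3 : G.Walk u5 u6) (h3 : G.Adj u6 u7) (p4 : G.Walk u7 u8)
    (e : Sym2 V) :
    e ∈ (p1.append (Walk.cons h1 (p2.append (Walk.cons h2 (p3.append (Walk.cons h3 p4)))))).edges ↔
      e ∈ p1.edges ∨ e = s(u2, u3) ∨ e ∈ p2.edges ∨ e = s(u4, u5) ∨ e ∈ p3.edges ∨
        e = s(u6, u7) ∨ e ∈ p4.edges := by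
  simp only [Walk.edges_append, Walk.edges_cons, List.mem_append, List.mem_cons]

end Quad

/-- For odd `n = 2(m+1)+1 ≥ 7`, if each of the four subcubes
`TQ_{n-2}^{ij}` of `TQ_n` contains two edge-disjoint Hamiltonian paths `P^{ij}`
from `ij00(0)^{n-7}000` to `ij11(0)^{n-7}000` and `Q^{ij}` from `ij00(0)^{n-7}100`
to `ij01(0)^{n-7}100`, then the concatenations
`P = P^{00} ⇒ rev(P^{10}) ⇒ P^{01} ⇒ rev(P^{11})` and
`Q = Q^{00} ⇒ rev(Q^{10}) ⇒ Q^{11} ⇒ rev(Q^{01})`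
are two edge-disjoint Hamiltonian paths of `TQ_n`. -/
theorem twistedCube_concatenation (m : ℕ) (hm : 2 ≤ m)
    (P : ∀ i j : Bool, (TwistedCube (m+1)).Walk (startP m i j) (endP m i j))
    (Q : ∀ i j : Bool, (TwistedCube (m+1)).Walk (startQ m i j) (endQ m i j))
    (hPpath : ∀ i j, (P i j).IsPath) (hQpath : ∀ i j, (Q i j).IsPath)
    (hPsub : ∀ i j v, v ∈ (P i j).support →
      v ⟨2*m+2, by omega⟩ = i ∧ v ⟨2*m+1, by omega⟩ = j)
    (hQsub : ∀ i j v, v ∈ (Q i j).support →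
      v ⟨2*m+2, by omega⟩ = i ∧ v ⟨2*m+1, by omega⟩ = j)
    (hPham : ∀ (i j : Bool) (v : Fin (2*(m+1)+1) → Bool),
      v ⟨2*m+2, by omega⟩ = i → v ⟨2*m+1, by omega⟩ = j → v ∈ (P i j).support)
    (hQham : ∀ (i j : Bool) (v : Fin (2*(m+1)+1) → Bool),
      v ⟨2*m+2, by omega⟩ = i → v ⟨2*m+1, by omega⟩ = j → v ∈ (Q i j).support)
    (hdisj : ∀ i j e, e ∈ (P i j).edges → e ∉ (Q i j).edges) :
    ∃ (h₁ : (TwistedCube (m+1)).Adj (endP m false false) (endP m true false))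
      (h₂ : (TwistedCube (m+1)).Adj (startP m true false) (startP m false true))
      (h₃ : (TwistedCube (m+1)).Adj (endP m false true) (endP m true true))
      (g₁ : (TwistedCube (m+1)).Adj (endQ m false false) (endQ m true false))
      (g₂ : (TwistedCube (m+1)).Adj (startQ m true false) (startQ m true true))
      (g₃ : (TwistedCube (m+1)).Adj (endQ m true true) (endQ m false true)),
      ((P false false).append (SimpleGraph.Walk.cons h₁
        ((P true false).reverse.append (SimpleGraph.Walk.cons h₂
          ((P false true).append (SimpleGraph.Walk.cons h₃
            (P true true).reverse)))))).IsPath ∧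
      ((P false false).append (SimpleGraph.Walk.cons h₁
        ((P true false).reverse.append (SimpleGraph.Walk.cons h₂
          ((P false true).append (SimpleGraph.Walk.cons h₃
            (P true true).reverse)))))).IsHamiltonian ∧
      ((Q false false).append (SimpleGraph.Walk.cons g₁
        ((Q true false).reverse.append (SimpleGraph.Walk.cons g₂
          ((Q true true).append (SimpleGraph.Walk.cons g₃
            (Q false true).reverse)))))).IsPath ∧
      ((Q false false).append (SimpleGraph.Walk.cons g₁
        ((Q true false).reverse.append (SimpleGraph.Walk.cons g₂
          ((Q true true).append (SimpleGraph.Walk.cons g₃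
            (Q false true).reverse)))))).IsHamiltonian ∧
      ∀ e, e ∈ ((P false false).append (SimpleGraph.Walk.cons h₁
        ((P true false).reverse.append (SimpleGraph.Walk.cons h₂
          ((P false true).append (SimpleGraph.Walk.cons h₃
            (P true true).reverse)))))).edges →
        e ∉ ((Q false false).append (SimpleGraph.Walk.cons g₁
        ((Q true false).reverse.append (SimpleGraph.Walk.cons g₂
          ((Q true true).append (SimpleGraph.Walk.cons g₃
            (Q false true).reverse)))))).edges := by
  classical
  have keyP : ∀ (i j i' j' : Bool) (v), v ∈ (P i j).support → v ∈ (P i' j').support →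
      i = i' ∧ j = j' := by
    intro i j i' j' v h1 h2
    obtain ⟨a1, a2⟩ := hPsub i j v h1
    obtain ⟨b1, b2⟩ := hPsub i' j' v h2
    exact ⟨a1.symm.trans b1, a2.symm.trans b2⟩
  have keyQ : ∀ (i j i' j' : Bool) (v), v ∈ (Q i j).support → v ∈ (Q i' j').support →
      i = i' ∧ j = j' := by
    intro i j i' j' v h1 h2
    obtain ⟨a1, a2⟩ := hQsub i j v h1
    obtain ⟨b1, b2⟩ := hQsub i' j' v h2
    exact ⟨a1.symm.trans b1, a2.symm.trans b2⟩
  -- disjointness, handling reverses uniformly via membership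
  have memP : ∀ (i j : Bool) {v}, v ∈ (P i j).reverse.support ↔ v ∈ (P i j).support := by
    intro i j v; rw [SimpleGraph.Walk.support_reverse, List.mem_reverse]
  have memQ : ∀ (i j : Bool) {v}, v ∈ (Q i j).reverse.support ↔ v ∈ (Q i j).support := by
    intro i j v; rw [SimpleGraph.Walk.support_reverse, List.mem_reverse]
  -- P path
  have hWPpath : ((P false false).append (SimpleGraph.Walk.cons (adj_h1 m)
        ((P true false).reverse.append (SimpleGraph.Walk.cons (adj_h2 m)
          ((P false true).append (SimpleGraph.Walk.cons (adj_h3 m)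
            (P true true).reverse)))))).IsPath := by
    refine quad_path _ _ _ _ _ _ _ (hPpath false false) ((hPpath true false).reverse)
      (hPpath false true) ((hPpath true true).reverse) ?_ ?_ ?_ ?_ ?_ ?_ <;>
      intro v hv hv' <;>
      first
      | (rw [memP] at hv hv' <;> have := keyP _ _ _ _ v hv hv' <;> simp at this)
      | (rw [memP] at hv' ; have := keyP _ _ _ _ v hv hv'; simp at this)
      | (rw [memP] at hv ; have := keyP _ _ _ _ v hv hv'; simp at this)
      | (have := keyP _ _ _ _ v hv hv'; simp at this)
  have hWQpath : ((Q false false).append (SimpleGraph.Walk.cons (adj_g1 m)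
        ((Q true false).reverse.append (SimpleGraph.Walk.cons (adj_g2 m hm)
          ((Q true true).append (SimpleGraph.Walk.cons (adj_g3 m)
            (Q false true).reverse)))))).IsPath := by
    refine quad_path _ _ _ _ _ _ _ (hQpath false false) ((hQpath true false).reverse)
      (hQpath true true) ((hQpath false true).reverse) ?_ ?_ ?_ ?_ ?_ ?_ <;>
      intro v hv hv' <;>
      first
      | (rw [memQ] at hv hv' <;> have := keyQ _ _ _ _ v hv hv' <;> simp at this)
      | (rw [memQ] at hv' ; have := keyQ _ _ _ _ v hv hv'; simp at this)
      | (rw [memQ] at hv ; have := keyQ _ _ _ _ v hv hv'; simp at this)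
      | (have := keyQ _ _ _ _ v hv hv'; simp at this)
  refine ⟨adj_h1 m, adj_h2 m, adj_h3 m, adj_g1 m, adj_g2 m hm, adj_g3 m,
    hWPpath, ?_, hWQpath, ?_, ?_⟩
  · -- P hamiltonian
    refine quad_ham _ _ _ _ _ _ _ hWPpath ?_
    intro v
    have hv := hPham (v ⟨2*m+2, by omega⟩) (v ⟨2*m+1, by omega⟩) v rfl rfl
    simp only [memP]
    cases h1 : v ⟨2*m+2, by omega⟩ <;> cases h2 : v ⟨2*m+1, by omega⟩ <;>
      rw [h1, h2] at hv <;> tauto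
  · -- Q hamiltonian
    refine quad_ham _ _ _ _ _ _ _ hWQpath ?_
    intro v
    have hv := hQham (v ⟨2*m+2, by omega⟩) (v ⟨2*m+1, by omega⟩) v rfl rfl
    simp only [memQ]
    cases h1 : v ⟨2*m+2, by omega⟩ <;> cases h2 : v ⟨2*m+1, by omega⟩ <;>
      rw [h1, h2] at hv <;> tauto
  · -- edge disjointness
    have L1 : ∀ (i j i' j' : Bool) (e : Sym2 (Fin (2*(m+1)+1) → Bool)),
        e ∈ (P i j).edges → e ∈ (Q i' j').edges → False := by
      intro i j i' j' e
      induction e using Sym2.ind with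
      | _ a b =>
        intro h1 h2
        have ha := hPsub i j a ((P i j).fst_mem_support_of_mem_edges h1)
        have ha' := hQsub i' j' a ((Q i' j').fst_mem_support_of_mem_edges h2)
        obtain rfl : i = i' := ha.1.symm.trans ha'.1
        obtain rfl : j = j' := ha.2.symm.trans ha'.2
        exact hdisj i j _ h1 h2
    have L2 : ∀ (i j : Bool) (x y : Fin (2*(m+1)+1) → Bool),
        (x ⟨2*m+2, by omega⟩ ≠ y ⟨2*m+2, by omega⟩ ∨ x ⟨2*m+1, by omega⟩ ≠ y ⟨2*m+1, by omega⟩) →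
        s(x, y) ∈ (Q i j).edges → False := by
      intro i j x y hne h
      have hx := hQsub i j x ((Q i j).fst_mem_support_of_mem_edges h)
      have hy := hQsub i j y ((Q i j).snd_mem_support_of_mem_edges h)
      rcases hne with h' | h'
      · exact h' (hx.1.trans hy.1.symm)
      · exact h' (hx.2.trans hy.2.symm)
    have L2' : ∀ (i j : Bool) (x y : Fin (2*(m+1)+1) → Bool),
        (x ⟨2*m+2, by omega⟩ ≠ y ⟨2*m+2, by omega⟩ ∨ x ⟨2*m+1, by omega⟩ ≠ y ⟨2*m+1, by omega⟩) →
        s(x, y) ∈ (P i j).edges → False := by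
      intro i j x y hne h
      have hx := hPsub i j x ((P i j).fst_mem_support_of_mem_edges h)
      have hy := hPsub i j y ((P i j).snd_mem_support_of_mem_edges h)
      rcases hne with h' | h'
      · exact h' (hx.1.trans hy.1.symm)
      · exact h' (hx.2.trans hy.2.symm)
    have L3 : ∀ (x y c d : Fin (2*(m+1)+1) → Bool), x ⟨2, by omega⟩ = false →
        c ⟨2, by omega⟩ = true → d ⟨2, by omega⟩ = true → s(x, y) = s(c, d) → False := by
      intro x y c d hx hc hd h
      rcases Sym2.eq_iff.mp h with ⟨rfl, rfl⟩ | ⟨rfl, rfl⟩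
      · rw [hx] at hc; exact Bool.noConfusion hc
      · rw [hx] at hd; exact Bool.noConfusion hd
    intro e heP heQ
    have heP' := (quad_edges _ _ _ _ _ _ _ e).mp heP
    have heQ' := (quad_edges _ _ _ _ _ _ _ e).mp heQ
    rw [SimpleGraph.Walk.edges_reverse, List.mem_reverse,
        SimpleGraph.Walk.edges_reverse, List.mem_reverse] at heP' heQ'
    rcases heP' with hp | hp | hp | hp | hp | hp | hp <;>
    rcases heQ' with hq | hq | hq | hq | hq | hq | hq
    all_goals first
    | exact L1 _ _ _ _ e hp hq
    | (subst hq; refine L2' _ _ _ _ (Or.inl ?_) hp; simp [endQ_hi, startQ_hi, endP_hi, startP_hi]; done)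
    | (subst hq; refine L2' _ _ _ _ (Or.inr ?_) hp; simp [endQ_lo, startQ_lo, endP_lo, startP_lo]; done)
    | (subst hp; refine L2 _ _ _ _ (Or.inl ?_) hq; simp [endQ_hi, startQ_hi, endP_hi, startP_hi]; done)
    | (subst hp; refine L2 _ _ _ _ (Or.inr ?_) hq; simp [endQ_lo, startQ_lo, endP_lo, startP_lo]; done)
    | (subst hp;
       first
       | exact L3 _ _ _ _ (endP_bit2 m hm _ _) (endQ_bit2 m hm _ _) (endQ_bit2 m hm _ _) hq
       | exact L3 _ _ _ _ (endP_bit2 m hm _ _) (startQ_bit2 m hm _ _) (startQ_bit2 m hm _ _) hq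
       | exact L3 _ _ _ _ (startP_bit2 m hm _ _) (endQ_bit2 m hm _ _) (endQ_bit2 m hm _ _) hq
       | exact L3 _ _ _ _ (startP_bit2 m hm _ _) (startQ_bit2 m hm _ _) (startQ_bit2 m hm _ _) hq)
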